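/- Let d = 3, L = ℤ³, α = (−157/10000, −742/3125, −23/400) ∈ ℝ³, and N = 73. Then g_N*(α,L) = 9; in fact the distinct values of δ*_{n,N} for 1 ≤ n ≤ 73 are exactly 7/50, 443/3125, 456/3125, 59/400, 13/80, 557/3125, 1993/10000, 43/200, and 23/100. Hence the bound g_N* ≤ 2³ + 1 = 9 is attained in dimension 3. -/

import Mathlib

set_option maxRecDepth 1000000

open Matrix Set

/-- The point of the lattice `ℤ^d M₀` corresponding to the integer row vector `w`. -/
noncomputable def latticeVec {d : ℕ} (M₀ : Matrix (Fin d) (Fin d) ℝ) (w : Fin d → ℤ) :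
    Fin d → ℝ :=
  (fun i => (w i : ℝ)) ᵥ* M₀

/-- `δ*_{n,N}`: the smallest positive distance, in the maximum metric (the sup norm on
`Fin d → ℝ`), from `n α` to a point `m α + ℓ` with `1 ≤ m ≤ N` and `ℓ ∈ ℤ^d M₀`. -/
noncomputable def deltaStar {d : ℕ} (M₀ : Matrix (Fin d) (Fin d) ℝ) (α : Fin d → ℝ)
    (N n : ℕ) : ℝ :=
  sInf { r : ℝ | ∃ (m : ℕ) (w : Fin d → ℤ), 1 ≤ m ∧ m ≤ N ∧
    r = ‖(n : ℝ) • α - (m : ℝ) • α - latticeVec M₀ w‖ ∧ 0 < r }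

/-- `g_N^*(α, ℤ^d M₀)`: the number of distinct values among `δ*_{1,N}, …, δ*_{N,N}`. -/
noncomputable def gStar {d : ℕ} (M₀ : Matrix (Fin d) (Fin d) ℝ) (α : Fin d → ℝ) (N : ℕ) : ℕ :=
  { x : ℝ | ∃ n : ℕ, 1 ≤ n ∧ n ≤ N ∧ x = deltaStar M₀ α N n }.ncard

/-! ### Auxiliary integer arithmetic set-up -/

/-- `α` scaled by `50000`, as an integer vector. -/
def gapsA : Fin 3 → ℤ := ![-785, -11872, -2875]

/-- Distance from `b/50000` to the nearest integer, scaled by `50000`. -/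
def gapsFdist (b : ℤ) : ℤ := min (b % 50000) (50000 - b % 50000)

/-- `50000` times the minimal positive sup-norm distance from `k•α` to `ℤ³`. -/
def gapsF (k : ℤ) : ℤ :=
  if k = 0 then 50000
  else max (gapsFdist (k * gapsA 0)) (max (gapsFdist (k * gapsA 1)) (gapsFdist (k * gapsA 2)))

/-- `50000 * δ*_{n,73}` as an integer. -/
def gapsD (n : ℕ) : ℤ :=
  (List.range 73).foldr
    (fun (m : ℕ) (acc : ℤ) => min (gapsF ((n : ℤ) - ((m : ℤ) + 1))) acc) 50000

/-- Nearest integer to `b / 50000`. -/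
def gapsWit (b : ℤ) : ℤ :=
  if b % 50000 ≤ 50000 - b % 50000 then b / 50000 else b / 50000 + 1

/-- The vector `α` of the example. -/
noncomputable def gapsAl : Fin 3 → ℝ := ![-157/10000, -742/3125, -23/400]

lemma gaps_foldr_min_le_base (g : ℕ → ℤ) (b : ℤ) (l : List ℕ) :
    l.foldr (fun x acc => min (g x) acc) b ≤ b := by
  induction l with
  | nil => simp
  | cons a t ih => exact le_trans (min_le_right _ _) ih

lemma gaps_foldr_min_le (g : ℕ → ℤ) (b : ℤ) (l : List ℕ) (m : ℕ) (hm : m ∈ l) :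
    l.foldr (fun x acc => min (g x) acc) b ≤ g m := by
  induction l with
  | nil => simp at hm
  | cons a t ih =>
    rcases List.mem_cons.1 hm with h | h
    · subst h; exact min_le_left _ _
    · exact le_trans (min_le_right _ _) (ih h)

lemma gaps_foldr_min_eq (g : ℕ → ℤ) (b : ℤ) (l : List ℕ) :
    l.foldr (fun x acc => min (g x) acc) b = b ∨
      ∃ m ∈ l, l.foldr (fun x acc => min (g x) acc) b = g m := by
  induction l with
  | nil => simp
  | cons a t ih =>
    rcases min_choice (g a) (t.foldr (fun x acc => min (g x) acc) b) with h | h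
    · exact Or.inr ⟨a, List.mem_cons_self, h⟩
    · rcases ih with h' | ⟨m, hm, h'⟩
      · exact Or.inl (by rw [List.foldr_cons, h, h'])
      · exact Or.inr ⟨m, List.mem_cons_of_mem _ hm, by rw [List.foldr_cons, h, h']⟩

lemma gapsD_le (n m : ℕ) (h1 : 1 ≤ m) (h2 : m ≤ 73) : gapsD n ≤ gapsF ((n : ℤ) - m) := by
  have h := gaps_foldr_min_le (fun x => gapsF ((n : ℤ) - ((x : ℤ) + 1))) 50000
    (List.range 73) (m - 1) (by simp [List.mem_range]; omega)
  have e : (n : ℤ) - (((m - 1 : ℕ) : ℤ) + 1) = (n : ℤ) - (m : ℤ) := by omega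
  rw [e] at h
  exact h

lemma gapsD_le_base (n : ℕ) : gapsD n ≤ 50000 := gaps_foldr_min_le_base _ _ _

lemma gapsD_attained (n : ℕ) (h1 : 1 ≤ n) (h2 : n ≤ 73) :
    ∃ m : ℕ, 1 ≤ m ∧ m ≤ 73 ∧ gapsD n = gapsF ((n : ℤ) - m) := by
  rcases gaps_foldr_min_eq (fun x => gapsF ((n : ℤ) - ((x : ℤ) + 1))) 50000 (List.range 73)
    with h | ⟨m, hm, h⟩
  · refine ⟨n, h1, h2, ?_⟩
    unfold gapsD; rw [h, sub_self]; simp [gapsF]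
  · simp only [List.mem_range] at hm
    refine ⟨m + 1, by omega, by omega, ?_⟩
    unfold gapsD; rw [h]
    norm_num

lemma gapsFdist_le_abs (b w : ℤ) : gapsFdist b ≤ |b - 50000 * w| := by
  have h2 : 50000 * (b / 50000) + b % 50000 = b := Int.mul_ediv_add_emod b 50000
  have h0 : 0 ≤ b % 50000 := Int.emod_nonneg b (by norm_num)
  have h1 : b % 50000 < 50000 := Int.emod_lt_of_pos b (by norm_num)
  unfold gapsFdist
  rcases le_or_gt w (b / 50000) with hw | hw
  · have hx : 50000 * w ≤ 50000 * (b / 50000) :=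
      mul_le_mul_of_nonneg_left hw (by norm_num : (0:ℤ) ≤ 50000)
    exact le_trans (min_le_left _ _) (le_trans (by omega) (le_abs_self _))
  · have hw' : b / 50000 + 1 ≤ w := hw
    have hx : 50000 * (b / 50000 + 1) ≤ 50000 * w :=
      mul_le_mul_of_nonneg_left hw' (by norm_num : (0:ℤ) ≤ 50000)
    exact le_trans (min_le_right _ _) (le_trans (by omega) (neg_le_abs _))

lemma gapsWit_int (b : ℤ) : |b - 50000 * gapsWit b| = gapsFdist b := by
  have h2 : 50000 * (b / 50000) + b % 50000 = b := Int.mul_ediv_add_emod b 50000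
  have h0 : 0 ≤ b % 50000 := Int.emod_nonneg b (by norm_num)
  have h1 : b % 50000 < 50000 := Int.emod_lt_of_pos b (by norm_num)
  unfold gapsWit gapsFdist
  split_ifs with h
  · rw [min_eq_left h, show b - 50000 * (b / 50000) = b % 50000 by omega,
      abs_of_nonneg h0]
  · rw [min_eq_right (by omega : 50000 - b % 50000 ≤ b % 50000),
      show b - 50000 * (b / 50000 + 1) = b % 50000 - 50000 by omega,
      abs_of_nonpos (by omega)]
    omega

lemma gapsFdist_le_abs_real (b w : ℤ) :
    (gapsFdist b : ℝ) / 50000 ≤ |(b : ℝ) / 50000 - (w : ℝ)| := by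
  rw [show (b : ℝ) / 50000 - (w : ℝ) = ((b - 50000 * w : ℤ) : ℝ) / 50000 by push_cast; ring,
    abs_div, abs_of_nonneg (by norm_num : (0:ℝ) ≤ 50000), ← Int.cast_abs]
  gcongr
  exact_mod_cast gapsFdist_le_abs b w

lemma gapsWit_spec (b : ℤ) :
    |(b : ℝ) / 50000 - (gapsWit b : ℝ)| = (gapsFdist b : ℝ) / 50000 := by
  rw [show (b : ℝ) / 50000 - (gapsWit b : ℝ) = ((b - 50000 * gapsWit b : ℤ) : ℝ) / 50000
      by push_cast; ring,
    abs_div, abs_of_nonneg (by norm_num : (0:ℝ) ≤ 50000), ← Int.cast_abs, gapsWit_int]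

lemma gaps_norm3 (v : Fin 3 → ℝ) : ‖v‖ = max |v 0| (max |v 1| |v 2|) := by
  apply le_antisymm
  · rw [pi_norm_le_iff_of_nonneg (by positivity)]
    intro i
    fin_cases i <;> simp only [Real.norm_eq_abs]
    · exact le_max_left _ _
    · exact le_trans (le_max_left _ _) (le_max_right _ _)
    · exact le_trans (le_max_right _ _) (le_max_right _ _)
  · refine max_le ?_ (max_le ?_ ?_) <;> rw [← Real.norm_eq_abs] <;> exact norm_le_pi_norm v _

lemma gaps_max_div (a b : ℝ) : max a b / 50000 = max (a / 50000) (b / 50000) := by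
  rcases le_total a b with h | h
  · rw [max_eq_right h, max_eq_right (by gcongr)]
  · rw [max_eq_left h, max_eq_left (by gcongr)]

lemma gapsAl_eq (i : Fin 3) : gapsAl i = (gapsA i : ℝ) / 50000 := by
  unfold gapsAl
  fin_cases i <;> norm_num [gapsA]

lemma gaps_lat1 (w : Fin 3 → ℤ) :
    latticeVec (1 : Matrix (Fin 3) (Fin 3) ℝ) w = fun i => (w i : ℝ) := by
  unfold latticeVec; rw [Matrix.vecMul_one]

lemma gaps_vec_apply (n m : ℕ) (w : Fin 3 → ℤ) (i : Fin 3) :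
    ((n : ℝ) • gapsAl - (m : ℝ) • gapsAl - latticeVec (1 : Matrix (Fin 3) (Fin 3) ℝ) w) i
      = ((((n : ℤ) - (m : ℤ)) * gapsA i : ℤ) : ℝ) / 50000 - (w i : ℝ) := by
  simp only [Pi.sub_apply, Pi.smul_apply, smul_eq_mul, gaps_lat1, gapsAl_eq]
  push_cast
  ring

lemma gapsD_mem : ∀ n : ℕ, 1 ≤ n → n ≤ 73 →
    gapsD n ∈ ([7000, 7088, 7296, 7375, 8125, 8912, 9965, 10750, 11500] : List ℤ) := by
  decide

lemma gapsD_pos (n : ℕ) (h1 : 1 ≤ n) (h2 : n ≤ 73) : 0 < gapsD n := by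
  have h := gapsD_mem n h1 h2
  simp only [List.mem_cons, List.not_mem_nil, or_false] at h
  rcases h with h | h | h | h | h | h | h | h | h <;> rw [h] <;> norm_num

/-- The key computation: `δ*_{n,73} = gapsD n / 50000`. -/
lemma gaps_delta_eq (n : ℕ) (h1 : 1 ≤ n) (h2 : n ≤ 73) :
    deltaStar (1 : Matrix (Fin 3) (Fin 3) ℝ) gapsAl 73 n = (gapsD n : ℝ) / 50000 := by
  have hDpos : (0 : ℝ) < (gapsD n : ℝ) / 50000 :=
    div_pos (by exact_mod_cast gapsD_pos n h1 h2) (by norm_num)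
  obtain ⟨m₀, hm1, hm2, hD⟩ := gapsD_attained n h1 h2
  have hmem : (gapsD n : ℝ) / 50000 ∈ { r : ℝ | ∃ (m : ℕ) (w : Fin 3 → ℤ), 1 ≤ m ∧ m ≤ 73 ∧
      r = ‖(n : ℝ) • gapsAl - (m : ℝ) • gapsAl - latticeVec 1 w‖ ∧ 0 < r } := by
    by_cases hk : (n : ℤ) - (m₀ : ℤ) = 0
    · refine ⟨m₀, ![1, 0, 0], hm1, hm2, ?_, hDpos⟩
      rw [gaps_norm3]
      simp only [gaps_vec_apply, hk]
      rw [hD, hk]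
      norm_num [gapsF]
      simp
    · refine ⟨m₀, fun i => gapsWit (((n : ℤ) - (m₀ : ℤ)) * gapsA i), hm1, hm2, ?_, hDpos⟩
      rw [gaps_norm3]
      simp only [gaps_vec_apply, gapsWit_spec]
      rw [hD]
      unfold gapsF
      rw [if_neg hk]
      push_cast [Int.cast_max]
      rw [gaps_max_div, gaps_max_div]
  apply le_antisymm
  · refine csInf_le ⟨0, ?_⟩ hmem
    rintro x ⟨m, w, hma, hmb, rfl, hpos⟩
    exact hpos.le
  · apply le_csInf ⟨_, hmem⟩
    rintro x ⟨m, w, hma, hmb, rfl, hpos⟩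
    by_cases hk : (n : ℤ) - (m : ℤ) = 0
    · have hv : ∀ i : Fin 3,
          ((n : ℝ) • gapsAl - (m : ℝ) • gapsAl - latticeVec 1 w) i = -(w i : ℝ) := by
        intro i
        rw [gaps_vec_apply, hk]
        simp
      have hex : ∃ i : Fin 3, w i ≠ 0 := by
        by_contra hcon
        push_neg at hcon
        have hz : ((n : ℝ) • gapsAl - (m : ℝ) • gapsAl - latticeVec 1 w) = 0 :=
          funext fun i => by rw [hv i, hcon i]; simp
        rw [hz, norm_zero] at hpos
        exact lt_irrefl _ hpos
      obtain ⟨i, hi⟩ := hex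
      have h1' : (1 : ℝ) ≤ ‖(n : ℝ) • gapsAl - (m : ℝ) • gapsAl - latticeVec 1 w‖ := by
        calc (1 : ℝ) ≤ |(w i : ℝ)| := by exact_mod_cast Int.one_le_abs hi
          _ = |((n : ℝ) • gapsAl - (m : ℝ) • gapsAl - latticeVec 1 w) i| := by
              rw [hv i, abs_neg]
          _ ≤ _ := by rw [← Real.norm_eq_abs]; exact norm_le_pi_norm _ i
      have hDle : (gapsD n : ℝ) / 50000 ≤ 1 := by
        rw [div_le_one (by norm_num)]
        exact_mod_cast gapsD_le_base n
      exact le_trans hDle h1'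
    · have hb : ∀ i : Fin 3, (gapsFdist (((n : ℤ) - m) * gapsA i) : ℝ) / 50000
          ≤ ‖(n : ℝ) • gapsAl - (m : ℝ) • gapsAl - latticeVec 1 w‖ := by
        intro i
        calc (gapsFdist (((n : ℤ) - m) * gapsA i) : ℝ) / 50000
            ≤ |((((n : ℤ) - m) * gapsA i : ℤ) : ℝ) / 50000 - (w i : ℝ)| :=
              gapsFdist_le_abs_real _ _
          _ = |((n : ℝ) • gapsAl - (m : ℝ) • gapsAl - latticeVec 1 w) i| := by
              rw [gaps_vec_apply]
          _ ≤ _ := by rw [← Real.norm_eq_abs]; exact norm_le_pi_norm _ i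
      have hf : (gapsF ((n : ℤ) - m) : ℝ) / 50000
          ≤ ‖(n : ℝ) • gapsAl - (m : ℝ) • gapsAl - latticeVec 1 w‖ := by
        unfold gapsF
        rw [if_neg hk]
        push_cast [Int.cast_max]
        rw [gaps_max_div, gaps_max_div]
        exact max_le (hb 0) (max_le (hb 1) (hb 2))
      refine le_trans ?_ hf
      gcongr
      exact_mod_cast gapsD_le n m hma hmb

lemma gapsD_vals : gapsD 1 = 7000 ∧ gapsD 2 = 7088 ∧ gapsD 3 = 7296 ∧ gapsD 6 = 7375 ∧
    gapsD 7 = 8125 ∧ gapsD 19 = 8912 ∧ gapsD 20 = 9965 ∧ gapsD 23 = 10750 ∧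
    gapsD 24 = 11500 := by
  decide

theorem gaps_example_dim3 :
    { x : ℝ | ∃ n : ℕ, 1 ≤ n ∧ n ≤ 73 ∧
        x = deltaStar (1 : Matrix (Fin 3) (Fin 3) ℝ) ![-157/10000, -742/3125, -23/400] 73 n }
      = ({7/50, 443/3125, 456/3125, 59/400, 13/80, 557/3125, 1993/10000, 43/200, 23/100} : Set ℝ) ∧
    gStar (1 : Matrix (Fin 3) (Fin 3) ℝ) ![-157/10000, -742/3125, -23/400] 73 = 9 ∧
    9 = 2 ^ 3 + 1 := by
  have hal : (![-157/10000, -742/3125, -23/400] : Fin 3 → ℝ) = gapsAl := rfl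
  obtain ⟨e1, e2, e3, e4, e5, e6, e7, e8, e9⟩ := gapsD_vals
  have hset : { x : ℝ | ∃ n : ℕ, 1 ≤ n ∧ n ≤ 73 ∧
        x = deltaStar (1 : Matrix (Fin 3) (Fin 3) ℝ) ![-157/10000, -742/3125, -23/400] 73 n }
      = ({7/50, 443/3125, 456/3125, 59/400, 13/80, 557/3125, 1993/10000, 43/200, 23/100} : Set ℝ) := by
    rw [hal]
    ext x
    simp only [Set.mem_setOf_eq, Set.mem_insert_iff, Set.mem_singleton_iff]
    constructor
    · rintro ⟨n, hn1, hn2, rfl⟩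
      rw [gaps_delta_eq n hn1 hn2]
      have h := gapsD_mem n hn1 hn2
      simp only [List.mem_cons, List.not_mem_nil, or_false] at h
      rcases h with h | h | h | h | h | h | h | h | h <;> rw [h] <;> norm_num
    · rintro (rfl | rfl | rfl | rfl | rfl | rfl | rfl | rfl | rfl)
      · exact ⟨1, by norm_num, by norm_num, by rw [gaps_delta_eq 1 (by norm_num) (by norm_num), e1]; norm_num⟩
      · exact ⟨2, by norm_num, by norm_num, by rw [gaps_delta_eq 2 (by norm_num) (by norm_num), e2]; norm_num⟩
      · exact ⟨3, by norm_num, by norm_num, by rw [gaps_delta_eq 3 (by norm_num) (by norm_num), e3]; norm_num⟩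
      · exact ⟨6, by norm_num, by norm_num, by rw [gaps_delta_eq 6 (by norm_num) (by norm_num), e4]; norm_num⟩
      · exact ⟨7, by norm_num, by norm_num, by rw [gaps_delta_eq 7 (by norm_num) (by norm_num), e5]; norm_num⟩
      · exact ⟨19, by norm_num, by norm_num, by rw [gaps_delta_eq 19 (by norm_num) (by norm_num), e6]; norm_num⟩
      · exact ⟨20, by norm_num, by norm_num, by rw [gaps_delta_eq 20 (by norm_num) (by norm_num), e7]; norm_num⟩
      · exact ⟨23, by norm_num, by norm_num, by rw [gaps_delta_eq 23 (by norm_num) (by norm_num), e8]; norm_num⟩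
      · exact ⟨24, by norm_num, by norm_num, by rw [gaps_delta_eq 24 (by norm_num) (by norm_num), e9]; norm_num⟩
  refine ⟨hset, ?_, by norm_num⟩
  unfold gStar
  rw [hset]
  rw [Set.ncard_insert_of_notMem (by norm_num)
      (Set.Finite.insert _ (Set.Finite.insert _ (Set.Finite.insert _ (Set.Finite.insert _
        (Set.Finite.insert _ (Set.Finite.insert _ (Set.Finite.insert _
          (Set.finite_singleton _)))))))),
    Set.ncard_insert_of_notMem (by norm_num)
      (Set.Finite.insert _ (Set.Finite.insert _ (Set.Finite.insert _ (Set.Finite.insert _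
        (Set.Finite.insert _ (Set.Finite.insert _ (Set.finite_singleton _))))))),
    Set.ncard_insert_of_notMem (by norm_num)
      (Set.Finite.insert _ (Set.Finite.insert _ (Set.Finite.insert _ (Set.Finite.insert _
        (Set.Finite.insert _ (Set.finite_singleton _)))))),
    Set.ncard_insert_of_notMem (by norm_num)
      (Set.Finite.insert _ (Set.Finite.insert _ (Set.Finite.insert _ (Set.Finite.insert _
        (Set.finite_singleton _))))),
    Set.ncard_insert_of_notMem (by norm_num)
      (Set.Finite.insert _ (Set.Finite.insert _ (Set.Finite.insert _ (Set.finite_singleton _)))),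
    Set.ncard_insert_of_notMem (by norm_num)
      (Set.Finite.insert _ (Set.Finite.insert _ (Set.finite_singleton _))),
    Set.ncard_insert_of_notMem (by norm_num)
      (Set.Finite.insert _ (Set.finite_singleton _)),
    Set.ncard_insert_of_notMem (by norm_num) (Set.finite_singleton _),
    Set.ncard_singleton]
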